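/- Two normal-form transformations define the same self-map of ℕ → Fin m if and only if they coincide graphically: if N(k; p_k, …, p₀) = N(l; q_l, …, q₀) as functions, where k, l ≥ 0, p₀, p_k, q₀, q_l ≥ 0, p_i ≥ 1 for 1 ≤ i ≤ k-1 and q_j ≥ 1 for 1 ≤ j ≤ l-1, then k = l and p_i = q_i for all 0 ≤ i ≤ k. -/

import Mathlib

/- The automaton transformation `f₀` of the Mealy automaton `I_m` acting on
infinite words `u : ℕ → Fin m`: if `u` is constantly `m-1` it returns the
constant `0` sequence; otherwise, with `j` the least index where `u j ≠ m-1`,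
it sets positions `≤ j` to `0` and keeps the rest. -/
open Classical in
noncomputable def f0 (m : ℕ) (u : ℕ → Fin m) : ℕ → Fin m :=
  if h : ∃ j, (u j : ℕ) ≠ m - 1 then
    fun i => if i ≤ Nat.find h then ⟨0, (u 0).pos⟩ else u i
  else fun _ => ⟨0, (u 0).pos⟩

/- The automaton transformation `f₁` (the base-`m` odometer): if `u` is
constantly `m-1` it returns the constant `0` sequence; otherwise, with `j` the
least index where `u j ≠ m-1`, positions `< j` become `0`, position `j` is
incremented and the rest are kept. -/
open Classical in
noncomputable def f1 (m : ℕ) (u : ℕ → Fin m) : ℕ → Fin m :=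
  if h : ∃ j, (u j : ℕ) ≠ m - 1 then
    fun i =>
      if i < Nat.find h then ⟨0, (u 0).pos⟩
      else if hie : i = Nat.find h then
        ⟨(u i : ℕ) + 1, by
          have h2 := Nat.find_spec h
          rw [← hie] at h2
          have h3 := (u i).isLt
          have h4 := (u 0).pos
          omega⟩
      else u i
  else fun _ => ⟨0, (u 0).pos⟩

/- The inner part `B j = f₀ ∘ f₁^{m^j p_j - 1} ∘ ⋯ ∘ f₀ ∘ f₁^{m p₁ - 1} ∘ f₀ ∘ f₁^{p₀}`
of a normal form (with `B 0 = f₀ ∘ f₁^{p₀}`). -/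
noncomputable def nfB (m : ℕ) (p : ℕ → ℕ) : ℕ → (ℕ → Fin m) → ℕ → Fin m
  | 0 => f0 m ∘ (f1 m)^[p 0]
  | j + 1 => f0 m ∘ (f1 m)^[m ^ (j + 1) * p (j + 1) - 1] ∘ nfB m p j

/- The normal-form transformation
`N(k; p_k, …, p₀) = f₁^{p_k} ∘ f₀ ∘ f₁^{m^{k-1} p_{k-1} - 1} ∘ ⋯ ∘ f₀ ∘ f₁^{m p₁ - 1} ∘ f₀ ∘ f₁^{p₀}`,
with `N(0; p₀) = f₁^{p₀}`. -/
noncomputable def nf (m : ℕ) (k : ℕ) (p : ℕ → ℕ) : (ℕ → Fin m) → ℕ → Fin m :=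
  match k with
  | 0 => (f1 m)^[p 0]
  | k' + 1 => (f1 m)^[p (k' + 1)] ∘ nfB m p k'


open Classical in
noncomputable def fv (m y : ℕ) : ℕ :=
  if h : ∃ v, ¬ (m ^ (v + 1) ∣ (y + 1)) then (y + 1) - (y + 1) % m ^ (Nat.find h + 1) else 0

lemma pow_big {m : ℕ} (hm : 2 ≤ m) (n : ℕ) : n < m ^ n :=
  lt_of_lt_of_le (Nat.lt_two_pow_self (n := n)) (Nat.pow_le_pow_left hm n)

lemma decompose {m : ℕ} (hm : 2 ≤ m) (y : ℕ) :
    ∃ v u c, 1 ≤ c ∧ c < m ∧ y + 1 = m ^ v * (m * u + c) := by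
  induction y using Nat.strong_induction_on with
  | _ y ih =>
    by_cases h : (y + 1) % m = 0
    · obtain ⟨z, hz⟩ := Nat.dvd_of_mod_eq_zero h
      have hz1 : 1 ≤ z := by
        rcases Nat.eq_zero_or_pos z with h0 | h0
        · rw [h0, mul_zero] at hz; omega
        · exact h0
      have hlt : z - 1 < y := by
        have : 2 * z ≤ m * z := Nat.mul_le_mul_right z hm
        omega
      obtain ⟨v, u, c, hc1, hc2, hd⟩ := ih (z - 1) hlt
      have hzz : z = m ^ v * (m * u + c) := by omega
      exact ⟨v + 1, u, c, hc1, hc2, by rw [hz, hzz, pow_succ]; ring⟩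
    · refine ⟨0, (y + 1) / m, (y + 1) % m, by omega, Nat.mod_lt _ (by omega), ?_⟩
      have := Nat.div_add_mod (y + 1) m
      rw [pow_zero, one_mul]
      omega

lemma fv_eq {m : ℕ} (hm : 2 ≤ m) {y v u c : ℕ} (hc1 : 1 ≤ c) (hc2 : c < m)
    (hy : y + 1 = m ^ v * (m * u + c)) : fv m y = m ^ (v + 1) * u := by
  have hmpos : 0 < m := by omega
  have hndvd : ¬ (m ^ (v + 1) ∣ (y + 1)) := by
    rw [hy, pow_succ]
    intro hdvd
    have h1 : m ∣ m * u + c := (Nat.mul_dvd_mul_iff_left (pow_pos hmpos v)).mp hdvd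
    have h2 : m ∣ c := (Nat.dvd_add_right (Dvd.intro u rfl)).mp h1
    have := Nat.le_of_dvd (by omega) h2
    omega
  have hex : ∃ t, ¬ (m ^ (t + 1) ∣ (y + 1)) := ⟨v, hndvd⟩
  rw [fv, dif_pos hex]
  have hfind : Nat.find hex = v := by
    rw [Nat.find_eq_iff]
    refine ⟨hndvd, fun t ht => ?_⟩
    rw [not_not]
    exact dvd_trans (pow_dvd_pow m (by omega)) (Dvd.intro _ hy.symm)
  rw [hfind]
  have hsum : y + 1 = m ^ v * c + m ^ (v + 1) * u := by rw [hy, pow_succ]; ring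
  have hmod : (y + 1) % m ^ (v + 1) = m ^ v * c := by
    rw [hsum, Nat.add_mul_mod_self_left]
    exact Nat.mod_eq_of_lt (by rw [pow_succ]; exact mul_lt_mul_of_pos_left hc2 (pow_pos hmpos v))
  omega

lemma fv_mul {m : ℕ} (hm : 2 ≤ m) (w : ℕ) : fv m (m * w) = m * w := by
  have := fv_eq hm (y := m * w) (v := 0) (u := w) (c := 1) (by omega) (by omega)
    (by rw [pow_zero, one_mul])
  simpa using this

lemma fv_pow_sub_one {m : ℕ} (hm : 2 ≤ m) (T : ℕ) : fv m (m ^ T - 1) = 0 := by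
  have hT : 1 ≤ m ^ T := Nat.one_le_pow _ _ (by omega)
  have := fv_eq hm (y := m ^ T - 1) (v := T) (u := 0) (c := 1) (by omega) (by omega)
    (by rw [mul_zero, zero_add, mul_one]; omega)
  simpa using this

lemma fv_le {m : ℕ} (hm : 2 ≤ m) (y : ℕ) : fv m y ≤ y := by
  obtain ⟨v, u, c, hc1, hc2, hy⟩ := decompose hm y
  rw [fv_eq hm hc1 hc2 hy]
  have hsum : y + 1 = m ^ v * c + m ^ (v + 1) * u := by rw [hy, pow_succ]; ring
  have : 1 ≤ m ^ v * c := Nat.one_le_iff_ne_zero.mpr (by positivity)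
  omega

lemma dvd_fv' {m : ℕ} (hm : 2 ≤ m) {t y : ℕ} (h : m ^ t ∣ y + 1) :
    m ^ (t + 1) ∣ fv m y := by
  obtain ⟨v, u, c, hc1, hc2, hy⟩ := decompose hm y
  rw [fv_eq hm hc1 hc2 hy]
  have htv : t ≤ v := by
    by_contra h'
    push_neg at h'
    have hd : m ^ (v + 1) ∣ y + 1 := dvd_trans (pow_dvd_pow m (by omega)) h
    rw [hy, pow_succ] at hd
    have h1 : m ∣ m * u + c := (Nat.mul_dvd_mul_iff_left (pow_pos (by omega : 0 < m) v)).mp hd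
    have h2 : m ∣ c := (Nat.dvd_add_right (Dvd.intro u rfl)).mp h1
    have := Nat.le_of_dvd (by omega) h2
    omega
  exact dvd_mul_of_dvd_left (pow_dvd_pow m (by omega)) u

lemma fv_scale {m : ℕ} (hm : 2 ≤ m) {z : ℕ} (hz : 1 ≤ z) :
    fv m (m * z - 1) = m * fv m (z - 1) := by
  obtain ⟨v, u, c, hc1, hc2, hz'⟩ := decompose hm (z - 1)
  have hzz : z = m ^ v * (m * u + c) := by omega
  have h1 : m * z - 1 + 1 = m ^ (v + 1) * (m * u + c) := by
    rw [pow_succ]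
    have : 1 ≤ m * z := by nlinarith
    have : m * z = m ^ v * m * (m * u + c) := by rw [mul_comm (m ^ v) m, mul_assoc, ← hzz]
    omega
  rw [fv_eq hm hc1 hc2 h1, fv_eq hm hc1 hc2 hz', pow_succ, pow_succ]
  ring

lemma fv_shift {m : ℕ} (hm : 2 ≤ m) {T t y : ℕ} (h : y + 1 < m ^ T) :
    fv m (m ^ T * t + y) = m ^ T * t + fv m y := by
  obtain ⟨v, u, c, hc1, hc2, hy⟩ := decompose hm y
  have hvT : v < T := by
    have h1 : m ^ v ≤ y + 1 := by
      rw [hy]; exact Nat.le_mul_of_pos_right _ (by omega)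
    have h2 : m ^ v < m ^ T := lt_of_le_of_lt h1 h
    exact (Nat.pow_lt_pow_iff_right (by omega)).mp h2
  have hTsplit : m ^ T = m ^ v * (m * m ^ (T - v - 1)) := by
    rw [← pow_succ']
    rw [← pow_add]
    congr 1
    omega
  have key : m ^ T * t + y + 1 = m ^ v * (m * (m ^ (T - v - 1) * t + u) + c) := by
    have e1 : m ^ T * t + y + 1 = m ^ T * t + (y + 1) := by omega
    rw [e1, hy, hTsplit]
    ring
  rw [fv_eq hm hc1 hc2 key, fv_eq hm hc1 hc2 hy]
  have : m ^ (v + 1) * m ^ (T - v - 1) = m ^ T := by rw [← pow_add]; congr 1; omega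
  rw [mul_add, ← mul_assoc, this]

noncomputable def chA (m : ℕ) (p : ℕ → ℕ) (a : ℕ) : ℕ → ℕ
  | 0 => a
  | j + 1 => fv m (chA m p a j + (m ^ (j + 1) * p (j + 1) - 1))

noncomputable def Afun (m : ℕ) (k : ℕ) (p : ℕ → ℕ) (s : ℕ) : ℕ :=
  match k with
  | 0 => s + p 0
  | k' + 1 => chA m p (fv m (s + p 0)) k' + p (k' + 1)

lemma chA_congr {m : ℕ} {p r : ℕ → ℕ} {j : ℕ} (h : ∀ i, 1 ≤ i → i ≤ j → p i = r i)
    (a : ℕ) : chA m p a j = chA m r a j := by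
  induction j with
  | zero => rfl
  | succ j ih =>
    show fv m (chA m p a j + (m ^ (j + 1) * p (j + 1) - 1)) = _
    rw [ih (fun i h1 h2 => h i h1 (by omega)), h (j + 1) (by omega) (le_refl _)]
    rfl

lemma chA_dvd {m : ℕ} (hm : 2 ≤ m) {p : ℕ → ℕ} {j a : ℕ}
    (hp : ∀ i, 1 ≤ i → i ≤ j → 1 ≤ p i) (ha : m ∣ a) : m ^ (j + 1) ∣ chA m p a j := by
  induction j with
  | zero => simpa [chA] using ha
  | succ j ih =>
    have hd := ih (fun i h1 h2 => hp i h1 (by omega))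
    have hp1 := hp (j + 1) (by omega) (le_refl _)
    show m ^ (j + 2) ∣ fv m (chA m p a j + (m ^ (j + 1) * p (j + 1) - 1))
    apply dvd_fv' hm
    have h1 : 0 < m ^ (j + 1) * p (j + 1) := Nat.mul_pos (pow_pos (by omega) _) (by omega)
    have h2 : chA m p a j + (m ^ (j + 1) * p (j + 1) - 1) + 1
        = chA m p a j + m ^ (j + 1) * p (j + 1) := by omega
    rw [h2]
    exact Nat.dvd_add hd (Dvd.intro _ rfl)

lemma chA_shift {m : ℕ} (hm : 2 ≤ m) (p : ℕ → ℕ) (a j : ℕ) :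
    ∃ T0, ∀ T, T0 ≤ T → chA m p (m ^ T + a) j = m ^ T + chA m p a j := by
  induction j with
  | zero => exact ⟨0, fun T _ => rfl⟩
  | succ j ih =>
    obtain ⟨T0, h0⟩ := ih
    set y := chA m p a j + (m ^ (j + 1) * p (j + 1) - 1) with hy
    refine ⟨max T0 (y + 2), fun T hT => ?_⟩
    show fv m (chA m p (m ^ T + a) j + (m ^ (j + 1) * p (j + 1) - 1)) = m ^ T + fv m y
    rw [h0 T (le_trans (le_max_left _ _) hT)]
    have e : m ^ T + chA m p a j + (m ^ (j + 1) * p (j + 1) - 1) = m ^ T * 1 + y := by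
      rw [mul_one]; omega
    rw [e, fv_shift hm ?_, mul_one]
    have h1 : y + 2 ≤ T := le_trans (le_max_right _ _) hT
    have h2 := pow_big hm T
    omega

lemma chA_scale {m : ℕ} (hm : 2 ≤ m) {p : ℕ → ℕ} (hp1 : 1 ≤ p 1) {j : ℕ}
    (hpj : ∀ i, 2 ≤ i → i ≤ j + 1 → 1 ≤ p i) (a : ℕ) :
    chA m p (m * a) (j + 1) = m * chA m (fun i => p (i + 1)) (fv m (a + (p 1 - 1))) j := by
  induction j with
  | zero =>
    show fv m (m * a + (m ^ 1 * p 1 - 1)) = m * fv m (a + (p 1 - 1))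
    have hmul : m * (a + p 1) = m * a + m * p 1 := by ring
    have hmp : 1 ≤ m * p 1 := by nlinarith
    have e1 : m * a + (m ^ 1 * p 1 - 1) = m * (a + p 1) - 1 := by rw [pow_one]; omega
    rw [e1, fv_scale hm (by omega)]
    congr 2
    omega
  | succ j ih =>
    have ihh := ih (fun i h1 h2 => hpj i h1 (by omega))
    have hp2 : 1 ≤ p (j + 2) := hpj (j + 2) (by omega) (le_refl _)
    show fv m (chA m p (m * a) (j + 1) + (m ^ (j + 2) * p (j + 2) - 1)) = _
    rw [ihh]
    set c := chA m (fun i => p (i + 1)) (fv m (a + (p 1 - 1))) j with hc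
    have hX : 0 < m ^ (j + 1) * p (j + 2) := Nat.mul_pos (pow_pos (by omega) _) (by omega)
    have hX2 : 0 < m ^ (j + 2) * p (j + 2) := Nat.mul_pos (pow_pos (by omega) _) (by omega)
    have hpow : m ^ (j + 2) * p (j + 2) = m * (m ^ (j + 1) * p (j + 2)) := by
      rw [pow_succ]; ring
    have hmul : m * (c + m ^ (j + 1) * p (j + 2)) = m * c + m * (m ^ (j + 1) * p (j + 2)) := by
      ring
    have e : m * c + (m ^ (j + 2) * p (j + 2) - 1) = m * (c + m ^ (j + 1) * p (j + 2)) - 1 := by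
      omega
    have hr : chA m (fun i => p (i + 1)) (fv m (a + (p 1 - 1))) (j + 1)
        = fv m (c + (m ^ (j + 1) * p (j + 2) - 1)) := rfl
    rw [e, fv_scale hm (by omega), hr]
    congr 2
    omega

lemma chA_range {m : ℕ} (hm : 2 ≤ m) {p : ℕ → ℕ} {j : ℕ}
    (hp : ∀ i, 1 ≤ i → i ≤ j → 1 ≤ p i) :
    ∃ T, ∀ w, T ≤ w → ∃ y, w ≤ y ∧ chA m p (fv m y) j = m ^ (j + 1) * w := by
  induction j with
  | zero =>
    refine ⟨0, fun w _ => ⟨m * w, Nat.le_mul_of_pos_left w (by omega), ?_⟩⟩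
    show fv m (m * w) = m ^ 1 * w
    rw [fv_mul hm, pow_one]
  | succ j ih =>
    obtain ⟨T, hT⟩ := ih (fun i h1 h2 => hp i h1 (by omega))
    refine ⟨T + p (j + 1) + 1, fun w hw => ?_⟩
    have hpj1 : 1 ≤ p (j + 1) := hp (j + 1) (by omega) (le_refl _)
    set t := m * w + 1 - p (j + 1) with ht
    have h2w : 2 * w ≤ m * w := Nat.mul_le_mul_right w hm
    have htT : T ≤ t := by omega
    obtain ⟨y, hy1, hy2⟩ := hT t htT
    refine ⟨y, by omega, ?_⟩
    show fv m (chA m p (fv m y) j + (m ^ (j + 1) * p (j + 1) - 1)) = m ^ (j + 2) * w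
    rw [hy2]
    have h1 : m ^ (j + 1) * t + m ^ (j + 1) * p (j + 1) = m ^ (j + 1) * (m * w + 1) := by
      rw [← mul_add]; congr 1; omega
    have h2 : 0 < m ^ (j + 1) * p (j + 1) := Nat.mul_pos (pow_pos (by omega) _) (by omega)
    have e : m ^ (j + 1) * t + (m ^ (j + 1) * p (j + 1) - 1) = m ^ (j + 1) * (m * w + 1) - 1 := by
      omega
    rw [e]
    have h3 : 0 < m ^ (j + 1) * (m * w + 1) := Nat.mul_pos (pow_pos (by omega) _) (by omega)
    have h4 : (m ^ (j + 1) * (m * w + 1) - 1) + 1 = m ^ (j + 1) * (m * w + 1) := by omega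
    rw [fv_eq hm (by omega : (1:ℕ) ≤ 1) (by omega : 1 < m) h4]

lemma chA_zero {m : ℕ} (hm : 2 ≤ m) {p : ℕ → ℕ} {K : ℕ}
    (hp : ∀ i, 1 ≤ i → i ≤ K → 1 ≤ p i) (B : ℕ) :
    ∃ y, B ≤ y ∧ chA m p (fv m y) K = 0 := by
  cases K with
  | zero =>
    refine ⟨m ^ (B + 1) - 1, ?_, ?_⟩
    · have := pow_big hm (B + 1); omega
    · show fv m (m ^ (B + 1) - 1) = 0
      exact fv_pow_sub_one hm (B + 1)
  | succ K' =>
    obtain ⟨T, hT⟩ := chA_range hm (p := p) (j := K') (fun i h1 h2 => hp i h1 (by omega))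
    have hp1 : 1 ≤ p (K' + 1) := hp (K' + 1) (by omega) (le_refl _)
    set V := T + p (K' + 1) + B + 1 with hV
    have hVb := pow_big hm V
    set w := m ^ V - p (K' + 1) with hw
    obtain ⟨y, hy1, hy2⟩ := hT w (by omega)
    refine ⟨y, by omega, ?_⟩
    show fv m (chA m p (fv m y) K' + (m ^ (K' + 1) * p (K' + 1) - 1)) = 0
    rw [hy2]
    have h1 : m ^ (K' + 1) * w + m ^ (K' + 1) * p (K' + 1) = m ^ (K' + 1 + V) := by
      have hwp : w + p (K' + 1) = m ^ V := by omega
      rw [← mul_add, hwp, ← pow_add]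
    have h2 : 0 < m ^ (K' + 1) * p (K' + 1) := Nat.mul_pos (pow_pos (by omega) _) (by omega)
    have e : m ^ (K' + 1) * w + (m ^ (K' + 1) * p (K' + 1) - 1) = m ^ (K' + 1 + V) - 1 := by
      omega
    rw [e, fv_pow_sub_one hm]

lemma fv_m_dvd {m : ℕ} (hm : 2 ≤ m) (y : ℕ) : m ∣ fv m y := by
  have := dvd_fv' hm (t := 0) (y := y) (by simpa using (one_dvd _))
  simpa using this

lemma Afun_succ {m : ℕ} (k' : ℕ) (p : ℕ → ℕ) (s : ℕ) :
    Afun m (k' + 1) p s = chA m p (fv m (s + p 0)) k' + p (k' + 1) := rfl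

lemma Afun_zero {m : ℕ} (p : ℕ → ℕ) (s : ℕ) : Afun m 0 p s = s + p 0 := rfl

lemma lem_k0 {m : ℕ} (hm : 2 ≤ m) {l' : ℕ} {p q : ℕ → ℕ}
    (hq : ∀ i, 1 ≤ i → i ≤ (l' + 1) - 1 → 1 ≤ q i)
    (h : ∀ s, Afun m 0 p s = Afun m (l' + 1) q s) : False := by
  have hdvd : ∀ s : ℕ, m ∣ chA m q (fv m (s + q 0)) l' := fun s =>
    dvd_trans (dvd_pow_self m (Nat.succ_ne_zero l'))
      (chA_dvd hm (fun i h1 h2 => hq i h1 (by omega)) (fv_m_dvd hm _))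
  have h0 := h 0
  have h1 := h 1
  rw [Afun_succ] at h0 h1
  rw [Afun_zero] at h0
  rw [Afun_zero] at h1
  obtain ⟨d0, hd0⟩ := hdvd 0
  obtain ⟨d1, hd1⟩ := hdvd 1
  rw [hd0] at h0; rw [hd1] at h1
  -- p 0 = m * d0 + q (l'+1), 1 + p 0 = m * d1 + q (l'+1)
  have : m * d1 = m * d0 + 1 := by omega
  rcases Nat.lt_or_ge d1 (d0 + 1) with hh | hh
  · have : m * d1 ≤ m * d0 := Nat.mul_le_mul_left m (by omega)
    omega
  · have : m * (d0 + 1) ≤ m * d1 := Nat.mul_le_mul_left m hh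
    have : m * (d0 + 1) = m * d0 + m := by ring
    omega

lemma mt_top_le {m : ℕ} (hm : 2 ≤ m) {k' l' : ℕ} {p q : ℕ → ℕ}
    (hp : ∀ i, 1 ≤ i → i ≤ (k' + 1) - 1 → 1 ≤ p i)
    (h : ∀ s, Afun m (k' + 1) p s = Afun m (l' + 1) q s) :
    q (l' + 1) ≤ p (k' + 1) := by
  obtain ⟨y, hyB, hy0⟩ := chA_zero hm (p := p) (K := k')
    (fun i h1 h2 => hp i h1 (by omega)) (p 0)
  have hs : y - p 0 + p 0 = y := by omega
  have := h (y - p 0)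
  rw [Afun_succ, Afun_succ, hs, hy0] at this
  omega

lemma mt_zero_le {m : ℕ} (hm : 2 ≤ m) {k' l' : ℕ} {p q : ℕ → ℕ}
    (hq : ∀ i, 1 ≤ i → i ≤ (l' + 1) - 1 → 1 ≤ q i)
    (h : ∀ s, Afun m (k' + 1) p s = Afun m (l' + 1) q s) :
    q 0 ≤ p 0 := by
  by_contra hlt
  push_neg at hlt
  set C := chA m p 0 k' + p (k' + 1) with hC
  set e := fv m (q 0 - p 0 - 1) with he
  obtain ⟨T1, hT1⟩ := chA_shift hm q e l'
  set V := max T1 (C + q 0 + p 0 + 2) with hV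
  have hVb := pow_big hm V
  have hVC : C + q 0 + p 0 + 2 ≤ V := le_max_right _ _
  set s := m ^ V - 1 - p 0 with hs
  have h1 : s + p 0 = m ^ V - 1 := by omega
  have h2 : s + q 0 = m ^ V + (q 0 - p 0 - 1) := by omega
  have hh := h s
  rw [Afun_succ, Afun_succ, h1, h2, fv_pow_sub_one hm] at hh
  have hfs : fv m (m ^ V + (q 0 - p 0 - 1)) = m ^ V + e := by
    have e1 : m ^ V + (q 0 - p 0 - 1) = m ^ V * 1 + (q 0 - p 0 - 1) := by ring
    rw [e1, fv_shift hm (by omega), mul_one, he]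
  rw [hfs, hT1 V (le_max_left _ _)] at hh
  omega

lemma star {m : ℕ} (hm : 2 ≤ m) {k' l' : ℕ} {p q : ℕ → ℕ}
    (h : ∀ s, Afun m (k' + 1) p s = Afun m (l' + 1) q s)
    (h0 : p 0 = q 0) (δ : ℕ) :
    chA m p (fv m δ) k' + p (k' + 1) = chA m q (fv m δ) l' + q (l' + 1) := by
  obtain ⟨T1, hT1⟩ := chA_shift hm p (fv m δ) k'
  obtain ⟨T2, hT2⟩ := chA_shift hm q (fv m δ) l'
  set T := max (max T1 T2) (δ + p 0 + 2) with hTd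
  have hTb := pow_big hm T
  have hT3 : δ + p 0 + 2 ≤ T := le_max_right _ _
  set s := m ^ T + δ - p 0 with hs
  have hsp : s + p 0 = m ^ T + δ := by omega
  have hsq : s + q 0 = m ^ T + δ := by omega
  have hh := h s
  rw [Afun_succ, Afun_succ, hsp, hsq] at hh
  have hfv : fv m (m ^ T + δ) = m ^ T + fv m δ := by
    have e1 : m ^ T + δ = m ^ T * 1 + δ := by ring
    rw [e1, fv_shift hm (by omega), mul_one]
  rw [hfv, hT1 T (le_trans (le_max_left _ _) (le_max_left _ _)),
    hT2 T (le_trans (le_max_right _ _) (le_max_left _ _))] at hh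
  omega

noncomputable def pshift (k' : ℕ) (p : ℕ → ℕ) : ℕ → ℕ :=
  fun i => if i = k' then 0 else if i = 0 then p 1 - 1 else p (i + 1)

lemma red {m : ℕ} (hm : 2 ≤ m) {k' : ℕ} {p : ℕ → ℕ}
    (hp : ∀ i, 1 ≤ i → i ≤ k' → 1 ≤ p i) (x : ℕ) :
    chA m p (m * x) k' = m * Afun m k' (pshift k' p) x := by
  cases k' with
  | zero =>
    show m * x = m * (x + pshift 0 p 0)
    simp [pshift]
  | succ j =>
    rw [chA_scale hm (hp 1 (by omega) (by omega)) (fun i h1 h2 => hp i (by omega) h2) x]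
    rw [Afun_succ]
    have htop : pshift (j + 1) p (j + 1) = 0 := by simp [pshift]
    have hzero : pshift (j + 1) p 0 = p 1 - 1 := by simp [pshift]
    rw [htop, hzero, Nat.add_zero]
    congr 1
    apply chA_congr
    intro i h1 h2
    have hi1 : i ≠ j + 1 := by omega
    have hi0 : i ≠ 0 := by omega
    simp [pshift, hi1, hi0]

theorem MT {m : ℕ} (hm : 2 ≤ m) :
    ∀ k l (p q : ℕ → ℕ),
      (∀ i, 1 ≤ i → i ≤ k - 1 → 1 ≤ p i) →
      (∀ i, 1 ≤ i → i ≤ l - 1 → 1 ≤ q i) →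
      (∀ s, Afun m k p s = Afun m l q s) →
      k = l ∧ ∀ i ≤ k, p i = q i := by
  intro k
  induction k with
  | zero =>
    intro l p q hp hq h
    cases l with
    | zero =>
      refine ⟨rfl, fun i hi => ?_⟩
      have := h 0
      rw [Afun_zero, Afun_zero] at this
      interval_cases i
      omega
    | succ l' => exact absurd h (fun hh => lem_k0 hm hq hh)
  | succ k' ih =>
    intro l p q hp hq h
    cases l with
    | zero => exact absurd (fun s => (h s).symm) (fun hh => lem_k0 hm hp hh)
    | succ l' =>
      have h0 : p 0 = q 0 :=
        le_antisymm (mt_zero_le hm hp (fun s => (h s).symm)) (mt_zero_le hm hq h)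
      have htop : p (k' + 1) = q (l' + 1) :=
        le_antisymm (mt_top_le hm hq (fun s => (h s).symm)) (mt_top_le hm hp h)
      have hp' : ∀ i, 1 ≤ i → i ≤ k' → 1 ≤ p i := fun i h1 h2 => hp i h1 (by omega)
      have hq' : ∀ i, 1 ≤ i → i ≤ l' → 1 ≤ q i := fun i h1 h2 => hq i h1 (by omega)
      have hred : ∀ x, Afun m k' (pshift k' p) x = Afun m l' (pshift l' q) x := by
        intro x
        have hst := star hm h h0 (m * x)
        rw [fv_mul hm, red hm hp' x, red hm hq' x, htop] at hst
        have := Nat.add_right_cancel hst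
        exact Nat.eq_of_mul_eq_mul_left (by omega) this
      obtain ⟨hkl', hpq'⟩ := ih l' (pshift k' p) (pshift l' q)
        (fun i h1 h2 => by
          have hi1 : i ≠ k' := by omega
          have hi0 : i ≠ 0 := by omega
          simp only [pshift, if_neg hi1, if_neg hi0]
          exact hp (i + 1) (by omega) (by omega))
        (fun i h1 h2 => by
          have hi1 : i ≠ l' := by omega
          have hi0 : i ≠ 0 := by omega
          simp only [pshift, if_neg hi1, if_neg hi0]
          exact hq (i + 1) (by omega) (by omega))
        hred
      subst hkl'
      refine ⟨rfl, fun i hi => ?_⟩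
      rcases Nat.eq_zero_or_pos i with hi0 | hi0
      · subst hi0; exact h0
      rcases Nat.lt_or_ge i (k' + 1) with hik | hik
      · -- 1 ≤ i ≤ k'
        rcases Nat.eq_or_lt_of_le hi0 with hi1 | hi2
        · -- i = 1
          subst hi1
          have hk1 : 1 ≤ k' := by omega
          have := hpq' 0 (by omega)
          have hk0 : (0 : ℕ) ≠ k' := by omega
          simp [pshift, hk0] at this
          have hp1 : 1 ≤ p 1 := hp 1 (by omega) (by omega)
          have hq1 : 1 ≤ q 1 := hq 1 (by omega) (by omega)
          show p 1 = q 1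
          omega
        · -- 2 ≤ i
          have := hpq' (i - 1) (by omega)
          have hi1 : i - 1 ≠ k' := by omega
          have hi0' : i - 1 ≠ 0 := by omega
          simp only [pshift, if_neg hi1, if_neg hi0'] at this
          have hii : i - 1 + 1 = i := by omega
          rwa [hii] at this
      · have : i = k' + 1 := by omega
        subst this
        exact htop

def enc (m : ℕ) (h0 : 0 < m) (n : ℕ) : ℕ → Fin m :=
  fun i => ⟨n / m ^ i % m, Nat.mod_lt _ h0⟩

lemma div_pow_sub_one {m : ℕ} (hm0 : 0 < m) (j : ℕ) {X : ℕ} (hX : 0 < X) :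
    (m ^ j * X - 1) / m ^ j = X - 1 := by
  have hp : 0 < m ^ j := pow_pos hm0 j
  have hmul : m ^ j * X = m ^ j * (X - 1) + m ^ j := by
    have : m ^ j * X = m ^ j * ((X - 1) + 1) := by congr 1; omega
    rw [this, mul_add, mul_one]
  have e : m ^ j * X - 1 = m ^ j - 1 + m ^ j * (X - 1) := by omega
  rw [e, Nat.add_mul_div_left _ _ hp, Nat.div_eq_of_lt (by omega), zero_add]

lemma mod_m_sub_one {m : ℕ} (hm : 2 ≤ m) {Y : ℕ} (hY : 0 < Y) :
    (m * Y - 1) % m = m - 1 := by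
  have hmul : m * Y = m * (Y - 1) + m := by
    have : m * Y = m * ((Y - 1) + 1) := by congr 1; omega
    rw [this, mul_add, mul_one]
  have e : m * Y - 1 = m - 1 + m * (Y - 1) := by omega
  rw [e, Nat.add_mul_mod_self_left]
  exact Nat.mod_eq_of_lt (by omega)

lemma digit_below {m : ℕ} (hm : 2 ≤ m) {j v X : ℕ} (hj : j < v) (hX : 0 < X) :
    (m ^ v * X - 1) / m ^ j % m = m - 1 := by
  have hsplit : m ^ v = m ^ j * m ^ (v - j) := by rw [← pow_add]; congr 1; omega
  have hX2 : 0 < m ^ (v - j) * X := Nat.mul_pos (pow_pos (by omega) _) hX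
  rw [hsplit, mul_assoc, div_pow_sub_one (by omega) j hX2]
  have hsplit2 : m ^ (v - j) = m * m ^ (v - j - 1) := by
    rw [← pow_succ']; congr 1; omega
  rw [hsplit2, mul_assoc]
  exact mod_m_sub_one hm (Nat.mul_pos (pow_pos (by omega) _) hX)

lemma digit_at {m : ℕ} (hm : 2 ≤ m) {v u c : ℕ} (hc1 : 1 ≤ c) (hc2 : c < m) :
    (m ^ v * (m * u + c) - 1) / m ^ v % m = c - 1 := by
  rw [div_pow_sub_one (by omega) v (by omega)]
  have e : m * u + c - 1 = m * u + (c - 1) := by omega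
  rw [e, Nat.mul_add_mod]
  exact Nat.mod_eq_of_lt (by omega)

lemma not_dvd_high {m : ℕ} (hm : 2 ≤ m) {n v u c : ℕ} (hc1 : 1 ≤ c) (hc2 : c < m)
    (hn : n + 1 = m ^ v * (m * u + c)) {i : ℕ} (hi : v < i) : ¬ m ^ i ∣ n + 1 := by
  intro hd
  have hd2 : m ^ (v + 1) ∣ n + 1 := dvd_trans (pow_dvd_pow m (by omega)) hd
  rw [hn, pow_succ] at hd2
  have h1 : m ∣ m * u + c := (Nat.mul_dvd_mul_iff_left (pow_pos (by omega : 0 < m) v)).mp hd2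
  have h2 : m ∣ c := (Nat.dvd_add_right (Dvd.intro u rfl)).mp h1
  have := Nat.le_of_dvd (by omega) h2
  omega

lemma enc_ex {m : ℕ} (hm : 2 ≤ m) (h0 : 0 < m) (n : ℕ) :
    ∃ j, ((enc m h0 n j : ℕ) ≠ m - 1) := by
  refine ⟨n, ?_⟩
  show ¬ (n / m ^ n % m = m - 1)
  rw [Nat.div_eq_of_lt (pow_big hm n), Nat.zero_mod]
  omega

open Classical in
lemma enc_find {m : ℕ} (hm : 2 ≤ m) (h0 : 0 < m) {n v u c : ℕ} (hc1 : 1 ≤ c) (hc2 : c < m)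
    (hn : n + 1 = m ^ v * (m * u + c))
    (hex : ∃ j, ((enc m h0 n j : ℕ) ≠ m - 1)) : Nat.find hex = v := by
  have hnn : n = m ^ v * (m * u + c) - 1 := by omega
  rw [Nat.find_eq_iff]
  constructor
  · show ¬ (n / m ^ v % m = m - 1)
    rw [hnn, digit_at hm hc1 hc2]
    omega
  · intro j hj
    rw [not_not]
    show n / m ^ j % m = m - 1
    rw [hnn]
    exact digit_below hm hj (by omega)

lemma f1_enc {m : ℕ} (hm : 2 ≤ m) (h0 : 0 < m) (n : ℕ) :
    f1 m (enc m h0 n) = enc m h0 (n + 1) := by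
  obtain ⟨v, u, c, hc1, hc2, hn⟩ := decompose hm n
  have hex : ∃ j, ((enc m h0 n j : ℕ) ≠ m - 1) := enc_ex hm h0 n
  have hfind : Nat.find hex = v := enc_find hm h0 hc1 hc2 hn hex
  unfold f1
  rw [dif_pos hex]
  funext i
  by_cases h1 : i < Nat.find hex
  · rw [if_pos h1]
    have hiv : i < v := by omega
    apply Fin.ext
    show (0 : ℕ) = (n + 1) / m ^ i % m
    have hsplit : m ^ v = m ^ i * m ^ (v - i) := by rw [← pow_add]; congr 1; omega
    rw [hn, hsplit, mul_assoc, Nat.mul_div_cancel_left _ (pow_pos (by omega : 0 < m) i)]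
    have hsplit2 : m ^ (v - i) = m * m ^ (v - i - 1) := by
      rw [← pow_succ']; congr 1; omega
    rw [hsplit2, mul_assoc, Nat.mul_mod_right]
  · rw [if_neg h1]
    by_cases h2 : i = Nat.find hex
    · rw [dif_pos h2]
      apply Fin.ext
      show n / m ^ i % m + 1 = (n + 1) / m ^ i % m
      have hiv : i = v := by omega
      subst hiv
      have hnn : n = m ^ i * (m * u + c) - 1 := by omega
      rw [hnn, digit_at hm hc1 hc2]
      have h4 : (m ^ i * (m * u + c) - 1) + 1 = m ^ i * (m * u + c) := by
        have : 0 < m ^ i * (m * u + c) := Nat.mul_pos (pow_pos (by omega) _) (by omega)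
        omega
      rw [h4, Nat.mul_div_cancel_left _ (pow_pos (by omega : 0 < m) i), Nat.mul_add_mod,
        Nat.mod_eq_of_lt hc2]
      omega
    · rw [dif_neg h2]
      apply Fin.ext
      show n / m ^ i % m = (n + 1) / m ^ i % m
      have hiv : v < i := by omega
      rw [Nat.succ_div_of_not_dvd (not_dvd_high hm hc1 hc2 hn hiv)]

lemma f0_enc {m : ℕ} (hm : 2 ≤ m) (h0 : 0 < m) (n : ℕ) :
    f0 m (enc m h0 n) = enc m h0 (fv m n) := by
  obtain ⟨v, u, c, hc1, hc2, hn⟩ := decompose hm n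
  have hex : ∃ j, ((enc m h0 n j : ℕ) ≠ m - 1) := enc_ex hm h0 n
  have hfind : Nat.find hex = v := enc_find hm h0 hc1 hc2 hn hex
  have hfv : fv m n = m ^ (v + 1) * u := fv_eq hm hc1 hc2 hn
  unfold f0
  rw [dif_pos hex]
  funext i
  by_cases h1 : i ≤ Nat.find hex
  · rw [if_pos h1]
    apply Fin.ext
    show (0 : ℕ) = fv m n / m ^ i % m
    have hiv : i ≤ v := by omega
    have hsplit : m ^ (v + 1) = m ^ i * (m * m ^ (v - i)) := by
      rw [← pow_succ', ← pow_add]; congr 1; omega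
    rw [hfv, hsplit, mul_assoc, Nat.mul_div_cancel_left _ (pow_pos (by omega : 0 < m) i),
      mul_assoc, Nat.mul_mod_right]
  · rw [if_neg h1]
    apply Fin.ext
    show n / m ^ i % m = fv m n / m ^ i % m
    have hiv : v < i := by omega
    set d := i - v - 1 with hd
    have hic : i = v + 1 + d := by omega
    have lhs1 : n / m ^ i = (n + 1) / m ^ i :=
      (Nat.succ_div_of_not_dvd (not_dvd_high hm hc1 hc2 hn hiv)).symm
    have lhs2 : (n + 1) / m ^ i = u / m ^ d := by
      rw [hn, hic]
      have hsplit : m ^ (v + 1 + d) = m ^ v * (m * m ^ d) := by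
        rw [← pow_succ', ← pow_add]; congr 1; omega
      rw [hsplit, Nat.mul_div_mul_left _ _ (pow_pos (by omega : 0 < m) v)]
      rw [show m * m ^ d = m * m ^ d from rfl]
      rw [← Nat.div_div_eq_div_mul]
      congr 1
      rw [Nat.mul_add_div (by omega : 0 < m), Nat.div_eq_of_lt hc2, add_zero]
    have rhs1 : fv m n / m ^ i = u / m ^ d := by
      rw [hfv, hic]
      have hsplit : m ^ (v + 1 + d) = m ^ (v + 1) * m ^ d := by rw [← pow_add]
      rw [hsplit, Nat.mul_div_mul_left _ _ (pow_pos (by omega : 0 < m) (v + 1))]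
    rw [lhs1, lhs2, rhs1]

lemma iter_f1_enc {m : ℕ} (hm : 2 ≤ m) (h0 : 0 < m) (t n : ℕ) :
    (f1 m)^[t] (enc m h0 n) = enc m h0 (n + t) := by
  induction t with
  | zero => rfl
  | succ t ih =>
    rw [Function.iterate_succ_apply', ih, f1_enc hm h0]
    rfl

lemma nfB_enc {m : ℕ} (hm : 2 ≤ m) (h0 : 0 < m) (p : ℕ → ℕ) (j s : ℕ) :
    nfB m p j (enc m h0 s) = enc m h0 (chA m p (fv m (s + p 0)) j) := by
  induction j with
  | zero =>
    show f0 m ((f1 m)^[p 0] (enc m h0 s)) = _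
    rw [iter_f1_enc hm h0, f0_enc hm h0]
    rfl
  | succ j ih =>
    show f0 m ((f1 m)^[m ^ (j + 1) * p (j + 1) - 1] (nfB m p j (enc m h0 s))) = _
    rw [ih, iter_f1_enc hm h0, f0_enc hm h0]
    rfl

lemma nf_enc {m : ℕ} (hm : 2 ≤ m) (h0 : 0 < m) (k : ℕ) (p : ℕ → ℕ) (s : ℕ) :
    nf m k p (enc m h0 s) = enc m h0 (Afun m k p s) := by
  cases k with
  | zero =>
    show (f1 m)^[p 0] (enc m h0 s) = _
    rw [iter_f1_enc hm h0, Afun_zero]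
  | succ k' =>
    show (f1 m)^[p (k' + 1)] (nfB m p k' (enc m h0 s)) = _
    rw [nfB_enc hm h0, iter_f1_enc hm h0, Afun_succ]

lemma digits_inj {m : ℕ} (hm : 2 ≤ m) :
    ∀ a b : ℕ, (∀ i, a / m ^ i % m = b / m ^ i % m) → a = b := by
  intro a
  induction a using Nat.strong_induction_on with
  | _ a ih =>
    intro b hd
    have hlead : ∀ x : ℕ, (∀ i, x / m ^ i % m = 0) → x = 0 := by
      intro x hx
      by_contra hx0
      have h2 : m ^ Nat.log m x ≤ x := Nat.pow_log_le_self m hx0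
      have h3 : x < m ^ (Nat.log m x + 1) := Nat.lt_pow_succ_log_self (by omega) x
      have h4 : 0 < x / m ^ Nat.log m x := Nat.div_pos h2 (pow_pos (by omega) _)
      have h5 : x / m ^ Nat.log m x < m := by
        rw [Nat.div_lt_iff_lt_mul (pow_pos (by omega : 0 < m) _)]
        rw [pow_succ] at h3
        exact lt_of_lt_of_le h3 (le_of_eq (mul_comm _ _))
      have := hx (Nat.log m x)
      rw [Nat.mod_eq_of_lt h5] at this
      omega
    rcases Nat.eq_zero_or_pos a with ha | ha
    · subst ha
      have : ∀ i, b / m ^ i % m = 0 := by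
        intro i
        have := hd i
        simp at this
        omega
      exact (hlead b this).symm
    · have h00 : a % m = b % m := by
        have := hd 0
        simpa using this
      have hrest : ∀ i, (a / m) / m ^ i % m = (b / m) / m ^ i % m := by
        intro i
        have := hd (i + 1)
        rwa [pow_succ', ← Nat.div_div_eq_div_mul, ← Nat.div_div_eq_div_mul] at this
      have hdiv : a / m = b / m := ih (a / m) (Nat.div_lt_self ha (by omega)) (b / m) hrest
      have e1 := Nat.div_add_mod a m
      have e2 := Nat.div_add_mod b m
      rw [hdiv, h00] at e1
      omega

lemma enc_inj {m : ℕ} (hm : 2 ≤ m) (h0 : 0 < m) {a b : ℕ}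
    (h : enc m h0 a = enc m h0 b) : a = b := by
  apply digits_inj hm
  intro i
  have := congrFun h i
  exact congrArg Fin.val this

/-- Two normal-form transformations define the same self-map of `ℕ → Fin m`
if and only if they coincide graphically. -/
theorem normal_form_unique (m : ℕ) (hm : 2 ≤ m) (k l : ℕ) (p q : ℕ → ℕ)
    (hp : ∀ i, 1 ≤ i → i ≤ k - 1 → 1 ≤ p i)
    (hq : ∀ j, 1 ≤ j → j ≤ l - 1 → 1 ≤ q j)
    (h : nf m k p = nf m l q) :
    k = l ∧ ∀ i ≤ k, p i = q i := by
  have h0 : 0 < m := by omega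
  have hA : ∀ s, Afun m k p s = Afun m l q s := by
    intro s
    have hs := congrFun h (enc m h0 s)
    rw [nf_enc hm h0, nf_enc hm h0] at hs
    exact enc_inj hm h0 hs
  exact MT hm k l p q hp hq hA
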